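/- Let E be a normed space, A ⊆ E a bounded set, and T : E → E a nonexpansive map with T A = A. Then T maps the Chebyshev center set C(A) into itself, i.e., if c ∈ C(A) then T c ∈ C(A). -/
import Mathlib


open Metric

/-- The Chebyshev radius of a set `A`. -/
noncomputable def chebRadius {E : Type*} [NormedAddCommGroup E] [NormedSpace ℝ E]
    (A : Set E) : ℝ :=
  sInf {r : ℝ | 0 ≤ r ∧ ∃ x : E, A ⊆ closedBall x r}

/-- The Chebyshev center set of `A`. -/
def chebCenter {E : Type*} [NormedAddCommGroup E] [NormedSpace ℝ E] (A : Set E) : Set E :=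
  {c : E | A ⊆ closedBall c (chebRadius A)}

/-- If `A` is bounded and the nonexpansive map `T` satisfies `T A = A`, then `T` maps the
Chebyshev center set of `A` into itself. -/
theorem nonexpansive_mapsTo_chebCenter
    {E : Type*} [NormedAddCommGroup E] [NormedSpace ℝ E]
    (A : Set E) (hA : Bornology.IsBounded A)
    (T : E → E) (hT : ∀ x y : E, ‖T x - T y‖ ≤ ‖x - y‖)
    (hTA : T '' A = A) :
    ∀ c ∈ chebCenter A, T c ∈ chebCenter A := by
  intro c hc a ha
  obtain ⟨a', ha', rfl⟩ : a ∈ T '' A := hTA.symm ▸ ha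
  have := hc ha'
  rw [mem_closedBall, dist_eq_norm] at *
  exact (hT a' c).trans this
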